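/- (Proposition: distance of the non-degenerate ancilla patch.) Let H_Ā ∈ F₂^{r_Ā × m_A} and H_B̄ ∈ F₂^{r_B̄ × m_B} satisfy ker H_Ā = {0, 𝟙}, ker H_B̄ = {0, 𝟙}, and ker (H_B̄)ᵀ = {0}, and consider the hypergraph product code of (H_Ā, H_B̄). Then: (a) every nontrivial X-type logical operator has Hamming weight at least min(m_A, m_B), and every nontrivial Z-type logical operator has Hamming weight at least min(m_A, m_B); (b) there exists a nontrivial X-type logical operator of weight exactly m_A (supported on a column of VV) and a nontrivial Z-type logical operator of weight exactly m_B (supported on a row of VV). Hence the minimum weight over all nontrivial X- and Z-type logical operators equals min(m_A, m_B), i.e., the code distance is min(m_A, m_B). -/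

import Mathlib

/-- Hamming weight of a vector over `ZMod 2`. -/
def wt {ι : Type} [Fintype ι] (v : ι → ZMod 2) : ℕ :=
  (Finset.univ.filter fun i => v i ≠ 0).card

/-- The `Z`-check matrix of the hypergraph product code of `(H_A, H_B)`. -/
def hgpZ {rA nA rB nB : ℕ} (HA : Matrix (Fin rA) (Fin nA) (ZMod 2))
    (HB : Matrix (Fin rB) (Fin nB) (ZMod 2)) :
    Matrix (Fin rA × Fin nB) ((Fin nA × Fin nB) ⊕ (Fin rA × Fin rB)) (ZMod 2) :=
  Matrix.of fun p q =>
    match q with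
    | Sum.inl kl => if p.2 = kl.2 then HA p.1 kl.1 else 0
    | Sum.inr kl => if p.1 = kl.1 then HB kl.2 p.2 else 0

/-- The `X`-check matrix of the hypergraph product code of `(H_A, H_B)`. -/
def hgpX {rA nA rB nB : ℕ} (HA : Matrix (Fin rA) (Fin nA) (ZMod 2))
    (HB : Matrix (Fin rB) (Fin nB) (ZMod 2)) :
    Matrix (Fin nA × Fin rB) ((Fin nA × Fin nB) ⊕ (Fin rA × Fin rB)) (ZMod 2) :=
  Matrix.of fun p q =>
    match q with
    | Sum.inl kl => if p.1 = kl.1 then HB p.2 kl.2 else 0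
    | Sum.inr kl => if p.2 = kl.2 then HA kl.1 p.1 else 0

/-- The `F₂`-row space of a matrix. -/
def rowSpan {m n : Type} [Fintype m] [Fintype n] (H : Matrix m n (ZMod 2)) :
    Submodule (ZMod 2) (n → ZMod 2) :=
  Submodule.span (ZMod 2) (Set.range fun i => fun j => H i j)

/-- The indicator vector of the `ℓ`-th column of `VV` (zero on `CC`). -/
def colVV {nA nB rA rB : ℕ} (ℓ : Fin nB) :
    (Fin nA × Fin nB) ⊕ (Fin rA × Fin rB) → ZMod 2
  | Sum.inl kl => if kl.2 = ℓ then 1 else 0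
  | Sum.inr _ => 0

/-- The indicator vector of the `k`-th row of `VV` (zero on `CC`). -/
def rowVV {nA nB rA rB : ℕ} (k : Fin nA) :
    (Fin nA × Fin nB) ⊕ (Fin rA × Fin rB) → ZMod 2
  | Sum.inl kl => if kl.1 = k then 1 else 0
  | Sum.inr _ => 0


open Matrix Module

private lemma zmod2_add_self (a : ZMod 2) : a + a = 0 := by revert a; decide

private lemma zmod2_eq_of_add_eq_zero {a b : ZMod 2} (h : a + b = 0) : a = b := by
  revert h; revert b; revert a; decide

/-- sum functional -/
private def sumF (m : ℕ) : (Fin m → ZMod 2) →ₗ[ZMod 2] ZMod 2 where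
  toFun v := ∑ i, v i
  map_add' := by intros; simp [Finset.sum_add_distrib]
  map_smul' := by intros; simp [Finset.mul_sum]

private lemma ker_eq_span {r m : ℕ} (H : Matrix (Fin r) (Fin m) (ZMod 2))
    (hker : {v : Fin m → ZMod 2 | H.mulVec v = 0} = {0, fun _ => 1}) :
    LinearMap.ker H.mulVecLin = Submodule.span (ZMod 2) {fun _ => (1 : ZMod 2)} := by
  ext v
  simp only [LinearMap.mem_ker, Matrix.mulVecLin_apply, Submodule.mem_span_singleton]
  constructor
  · intro h
    have hv : v ∈ {v : Fin m → ZMod 2 | H.mulVec v = 0} := h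
    rw [hker] at hv
    rcases hv with h | h
    · exact ⟨0, by simp [h]⟩
    · exact ⟨1, by rw [one_smul]; exact (Set.eq_of_mem_singleton h).symm⟩
  · rintro ⟨a, rfl⟩
    have h1 : (fun _ => (1:ZMod 2)) ∈ {v : Fin m → ZMod 2 | H.mulVec v = 0} := by
      rw [hker]; right; rfl
    have h1' : H.mulVec (fun _ => (1:ZMod 2)) = 0 := h1
    rw [Matrix.mulVec_smul, h1', smul_zero]

private lemma rank_eq {r m : ℕ} (hm : 0 < m) (H : Matrix (Fin r) (Fin m) (ZMod 2))
    (hker : {v : Fin m → ZMod 2 | H.mulVec v = 0} = {0, fun _ => 1}) :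
    H.rank = m - 1 := by
  have hone : (fun _ => (1:ZMod 2)) ≠ (0 : Fin m → ZMod 2) := by
    intro h
    have := congrFun h ⟨0, hm⟩
    simp at this
  have h1 : finrank (ZMod 2) (LinearMap.ker H.mulVecLin) = 1 := by
    rw [ker_eq_span H hker]; exact finrank_span_singleton hone
  have h2 := LinearMap.finrank_range_add_finrank_ker H.mulVecLin
  rw [h1, Module.finrank_pi, Fintype.card_fin] at h2
  have : H.rank = finrank (ZMod 2) (LinearMap.range H.mulVecLin) := rfl
  omega

/-- every even-weight vector is in the row space of `H` (as a column of `Hᵀ`). -/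
private lemma even_mem_range {r m : ℕ} (hm : 0 < m) (H : Matrix (Fin r) (Fin m) (ZMod 2))
    (hker : {v : Fin m → ZMod 2 | H.mulVec v = 0} = {0, fun _ => 1})
    (u : Fin m → ZMod 2) (hu : ∑ i, u i = 0) :
    ∃ c : Fin r → ZMod 2, H.transpose.mulVec c = u := by
  have h1' : H.mulVec (fun _ => (1:ZMod 2)) = 0 := by
    have : (fun _ => (1:ZMod 2)) ∈ {v : Fin m → ZMod 2 | H.mulVec v = 0} := by
      rw [hker]; right; rfl
    exact this
  have hWE : LinearMap.range H.transpose.mulVecLin ≤ LinearMap.ker (sumF m) := by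
    rintro x ⟨c, rfl⟩
    simp only [LinearMap.mem_ker, sumF, LinearMap.coe_mk, AddHom.coe_mk,
      Matrix.mulVecLin_apply]
    have : ∀ l, H.transpose.mulVec c l = ∑ i, H i l * c i := by
      intro l; simp [Matrix.mulVec, dotProduct, Matrix.transpose_apply]
    calc ∑ l, H.transpose.mulVec c l = ∑ l, ∑ i, H i l * c i := by
          simp [this]
      _ = ∑ i, (∑ l, H i l) * c i := by
          rw [Finset.sum_comm]; simp [Finset.sum_mul]
      _ = 0 := by
          apply Finset.sum_eq_zero
          intro i _
          have : ∑ l, H i l = 0 := by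
            have := congrFun h1' i
            simpa [Matrix.mulVec, dotProduct] using this
          rw [this, zero_mul]
  have hEdim : finrank (ZMod 2) (LinearMap.ker (sumF m)) = m - 1 := by
    have hsurj : Function.Surjective (sumF m) := by
      intro c
      refine ⟨Pi.single ⟨0, hm⟩ c, ?_⟩
      simp [sumF, Finset.sum_pi_single']
    have hrange : LinearMap.range (sumF m) = ⊤ := LinearMap.range_eq_top.mpr hsurj
    have h2 := LinearMap.finrank_range_add_finrank_ker (sumF m)
    rw [hrange, finrank_top, Module.finrank_pi, Fintype.card_fin, Module.finrank_self] at h2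
    omega
  have hWdim : finrank (ZMod 2) (LinearMap.range H.transpose.mulVecLin) = m - 1 := by
    have : finrank (ZMod 2) (LinearMap.range H.transpose.mulVecLin) = H.transpose.rank := rfl
    rw [this, Matrix.rank_transpose, rank_eq hm H hker]
  have hWeq : LinearMap.range H.transpose.mulVecLin = LinearMap.ker (sumF m) :=
    Submodule.eq_of_le_of_finrank_eq hWE (by rw [hWdim, hEdim])
  have hu' : u ∈ LinearMap.ker (sumF m) := by simpa [sumF, LinearMap.mem_ker] using hu
  rw [← hWeq] at hu'
  obtain ⟨c, hc⟩ := hu'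
  exact ⟨c, hc⟩

private lemma surj_of_kerT {r m : ℕ} (H : Matrix (Fin r) (Fin m) (ZMod 2))
    (hkerT : {v : Fin r → ZMod 2 | H.transpose.mulVec v = 0} = {0}) :
    Function.Surjective H.mulVec := by
  have hker : LinearMap.ker H.transpose.mulVecLin = ⊥ := by
    ext v
    simp only [LinearMap.mem_ker, Matrix.mulVecLin_apply, Submodule.mem_bot]
    constructor
    · intro h
      have : v ∈ {v : Fin r → ZMod 2 | H.transpose.mulVec v = 0} := h
      rwa [hkerT] at this
    · rintro rfl; simp
  have h1 : H.transpose.rank = r := by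
    have h2 := LinearMap.finrank_range_add_finrank_ker H.transpose.mulVecLin
    rw [hker, finrank_bot, Module.finrank_pi, Fintype.card_fin] at h2
    have : H.transpose.rank = finrank (ZMod 2) (LinearMap.range H.transpose.mulVecLin) := rfl
    omega
  have h2 : H.rank = r := by rw [← Matrix.rank_transpose]; exact h1
  have h3 : LinearMap.range H.mulVecLin = ⊤ := by
    apply Submodule.eq_top_of_finrank_eq
    rw [Module.finrank_pi, Fintype.card_fin]
    exact h2
  intro y
  obtain ⟨x, hx⟩ := LinearMap.range_eq_top.mp h3 y
  exact ⟨x, hx⟩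

private lemma card_le_wt {ι κ : Type} [Fintype ι] [DecidableEq ι] [Fintype κ] (v : ι → ZMod 2)
    (g : κ → ι) (hg : Function.Injective g) (h : ∀ k, v (g k) ≠ 0) :
    Fintype.card κ ≤ wt v := by
  rw [wt]
  have hsub : Finset.univ.image g ⊆ Finset.univ.filter (fun i => v i ≠ 0) := by
    intro i hi
    simp only [Finset.mem_image, Finset.mem_univ, true_and] at hi
    obtain ⟨k, rfl⟩ := hi
    simp [h k]
  calc Fintype.card κ = (Finset.univ.image g).card :=
        (Finset.card_image_of_injective _ hg).symm
    _ ≤ _ := Finset.card_le_card hsub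

private lemma mem_rowSpan_of_eq_sum {m n : Type} [Fintype m] [Fintype n]
    (H : Matrix m n (ZMod 2)) (c : m → ZMod 2) (v : n → ZMod 2)
    (hv : ∀ j, v j = ∑ i, c i * H i j) : v ∈ rowSpan H := by
  have : v = ∑ i, c i • (fun j => H i j) := by
    ext j
    simp [hv j, Finset.sum_apply]
  rw [this, rowSpan]
  exact Submodule.sum_mem _ fun i _ =>
    Submodule.smul_mem _ _ (Submodule.subset_span ⟨i, rfl⟩)

private lemma not_mem_rowSpan_of_pairing {m n : Type} [Fintype m] [Fintype n]
    (H : Matrix m n (ZMod 2)) (φ : (n → ZMod 2) →ₗ[ZMod 2] ZMod 2)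
    (hrows : ∀ i, φ (fun j => H i j) = 0) (v : n → ZMod 2) (hv : φ v ≠ 0) :
    v ∉ rowSpan H := by
  intro hmem
  have hle : rowSpan H ≤ LinearMap.ker φ := by
    rw [rowSpan, Submodule.span_le]
    rintro x ⟨i, rfl⟩
    exact hrows i
  exact hv (hle hmem)

private def sumAt {n : Type} [Fintype n] {κ : Type} [Fintype κ] (g : κ → n) :
    (n → ZMod 2) →ₗ[ZMod 2] ZMod 2 where
  toFun v := ∑ k, v (g k)
  map_add' := by intros; simp [Finset.sum_add_distrib]
  map_smul' := by intros; simp [Finset.mul_sum]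

section Main
variable {rAbar mA rBbar mB : ℕ}
  (HA : Matrix (Fin rAbar) (Fin mA) (ZMod 2))
  (HB : Matrix (Fin rBbar) (Fin mB) (ZMod 2))

private lemma checkZ_eq (v : (Fin mA × Fin mB) ⊕ (Fin rAbar × Fin rBbar) → ZMod 2)
    (hZ : (hgpZ HA HB).mulVec v = 0) (i : Fin rAbar) (j : Fin mB) :
    (∑ k, HA i k * v (Sum.inl (k, j))) + (∑ l, HB l j * v (Sum.inr (i, l))) = 0 := by
  have h := congrFun hZ (i, j)
  simpa [Matrix.mulVec, dotProduct, hgpZ, Fintype.sum_sum_type, Fintype.sum_prod_type,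
    ite_mul, zero_mul, mul_ite, mul_zero, Finset.sum_ite_irrel, Finset.sum_const_zero,
    Finset.sum_ite_eq, Finset.sum_ite_eq'] using h

private lemma checkX_eq (v : (Fin mA × Fin mB) ⊕ (Fin rAbar × Fin rBbar) → ZMod 2)
    (hX : (hgpX HA HB).mulVec v = 0) (i : Fin mA) (j : Fin rBbar) :
    (∑ l, HB j l * v (Sum.inl (i, l))) + (∑ k, HA k i * v (Sum.inr (k, j))) = 0 := by
  have h := congrFun hX (i, j)
  simpa [Matrix.mulVec, dotProduct, hgpX, Fintype.sum_sum_type, Fintype.sum_prod_type,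
    ite_mul, zero_mul, mul_ite, mul_zero, Finset.sum_ite_irrel, Finset.sum_const_zero,
    Finset.sum_ite_eq, Finset.sum_ite_eq'] using h

private lemma rowsum_zero {r m : ℕ} (H : Matrix (Fin r) (Fin m) (ZMod 2))
    (hker : {v : Fin m → ZMod 2 | H.mulVec v = 0} = {0, fun _ => 1}) (i : Fin r) :
    ∑ l, H i l = 0 := by
  have h1 : (fun _ => (1:ZMod 2)) ∈ {v : Fin m → ZMod 2 | H.mulVec v = 0} := by
    rw [hker]; right; rfl
  have h1' : H.mulVec (fun _ => (1:ZMod 2)) = 0 := h1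
  simpa [Matrix.mulVec, dotProduct] using congrFun h1' i

private lemma Xlog_bound (hmA : 0 < mA) (hmB : 0 < mB)
    (hkerA : {v : Fin mA → ZMod 2 | HA.mulVec v = 0} = {0, fun _ => 1})
    (hkerB : {v : Fin mB → ZMod 2 | HB.mulVec v = 0} = {0, fun _ => 1})
    (hkerBT : {v : Fin rBbar → ZMod 2 | HB.transpose.mulVec v = 0} = {0})
    (v : (Fin mA × Fin mB) ⊕ (Fin rAbar × Fin rBbar) → ZMod 2)
    (hZ : (hgpZ HA HB).mulVec v = 0) (hnt : v ∉ rowSpan (hgpX HA HB)) :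
    mA ≤ wt v := by
  have checkZ := checkZ_eq HA HB v hZ
  -- row sums of V lie in ker HA
  have hs : HA.mulVec (fun k => ∑ l, v (Sum.inl (k, l))) = 0 := by
    funext i
    have : HA.mulVec (fun k => ∑ l, v (Sum.inl (k, l))) i
        = ∑ l, ∑ k, HA i k * v (Sum.inl (k, l)) := by
      simp only [Matrix.mulVec, dotProduct, Finset.mul_sum]
      exact Finset.sum_comm
    rw [this]
    have : ∀ l : Fin mB, ∑ k, HA i k * v (Sum.inl (k, l))
        = ∑ l', HB l' l * v (Sum.inr (i, l')) :=
      fun l => zmod2_eq_of_add_eq_zero (checkZ i l)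
    rw [Finset.sum_congr rfl (fun l _ => this l), Finset.sum_comm]
    simp only [Pi.zero_apply]
    apply Finset.sum_eq_zero
    intro l' _
    rw [← Finset.sum_mul, rowsum_zero HB hkerB l', zero_mul]
  have hsmem : (fun k => ∑ l, v (Sum.inl (k, l))) ∈
      {u : Fin mA → ZMod 2 | HA.mulVec u = 0} := hs
  rw [hkerA] at hsmem
  rcases hsmem with hs0 | hs1
  · -- trivial case: v is in the row span, contradiction
    exfalso
    apply hnt
    have hs0' : ∀ k, ∑ l, v (Sum.inl (k, l)) = 0 := fun k => congrFun hs0 k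
    have hM : ∀ k : Fin mA, ∃ c : Fin rBbar → ZMod 2,
        HB.transpose.mulVec c = (fun l => v (Sum.inl (k, l))) :=
      fun k => even_mem_range hmB HB hkerB _ (hs0' k)
    choose M hM using hM
    have hMk : ∀ (k : Fin mA) (j' : Fin mB), ∑ j, HB j j' * M k j = v (Sum.inl (k, j')) := by
      intro k j'
      have := congrFun (hM k) j'
      simpa [Matrix.mulVec, dotProduct, Matrix.transpose_apply] using this
    -- CC part: v (inr (i,l)) = ∑ k, HA i k * M k l
    have hC : ∀ (i : Fin rAbar) (l : Fin rBbar),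
        v (Sum.inr (i, l)) = ∑ k, HA i k * M k l := by
      intro i l
      have hd : HB.transpose.mulVec
          (fun l' => v (Sum.inr (i, l')) + ∑ k, HA i k * M k l') = 0 := by
        funext j'
        have e1 : ∑ l', HB l' j' * v (Sum.inr (i, l'))
            = ∑ k, HA i k * v (Sum.inl (k, j')) :=
          (zmod2_eq_of_add_eq_zero (checkZ i j')).symm
        have e2 : ∑ l', HB l' j' * (∑ k, HA i k * M k l')
            = ∑ k, HA i k * v (Sum.inl (k, j')) := by
          calc ∑ l', HB l' j' * (∑ k, HA i k * M k l')
              = ∑ l', ∑ k, HB l' j' * (HA i k * M k l') := by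
                simp [Finset.mul_sum]
            _ = ∑ k, ∑ l', HB l' j' * (HA i k * M k l') := Finset.sum_comm
            _ = ∑ k, HA i k * ∑ l', HB l' j' * M k l' := by
                refine Finset.sum_congr rfl fun k _ => ?_
                rw [Finset.mul_sum]
                exact Finset.sum_congr rfl fun l' _ => by ring
            _ = ∑ k, HA i k * v (Sum.inl (k, j')) := by
                exact Finset.sum_congr rfl fun k _ => by rw [hMk k j']
        calc HB.transpose.mulVec (fun l' => v (Sum.inr (i, l')) + ∑ k, HA i k * M k l') j'
            = ∑ l', HB l' j' * (v (Sum.inr (i, l')) + ∑ k, HA i k * M k l') := by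
              simp [Matrix.mulVec, dotProduct, Matrix.transpose_apply]
          _ = (∑ l', HB l' j' * v (Sum.inr (i, l')))
              + ∑ l', HB l' j' * (∑ k, HA i k * M k l') := by
              simp [mul_add, Finset.sum_add_distrib]
          _ = 0 := by rw [e1, e2]; exact zmod2_add_self _
      have : (fun l' => v (Sum.inr (i, l')) + ∑ k, HA i k * M k l') ∈
          {u : Fin rBbar → ZMod 2 | HB.transpose.mulVec u = 0} := hd
      rw [hkerBT] at this
      exact zmod2_eq_of_add_eq_zero (congrFun this l)
    apply mem_rowSpan_of_eq_sum (hgpX HA HB) (fun p => M p.1 p.2)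
    intro q
    rcases q with ⟨k, l⟩ | ⟨k, l⟩
    · have : ∑ p : Fin mA × Fin rBbar, M p.1 p.2 * hgpX HA HB p (Sum.inl (k, l))
          = ∑ j, M k j * HB j l := by
        simp [hgpX, Fintype.sum_prod_type, mul_ite, mul_zero, ite_mul, zero_mul,
          Finset.sum_ite_irrel, Finset.sum_const_zero, Finset.sum_ite_eq, Finset.sum_ite_eq']
      rw [this, ← hMk k l]
      exact Finset.sum_congr rfl fun j _ => by ring
    · have : ∑ p : Fin mA × Fin rBbar, M p.1 p.2 * hgpX HA HB p (Sum.inr (k, l))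
          = ∑ i, M i l * HA k i := by
        simp [hgpX, Fintype.sum_prod_type, mul_ite, mul_zero, ite_mul, zero_mul,
          Finset.sum_ite_irrel, Finset.sum_const_zero, Finset.sum_ite_eq, Finset.sum_ite_eq']
      rw [this, hC k l]
      exact Finset.sum_congr rfl fun i _ => by ring
  · -- nontrivial case: every row of V is nonzero
    have hrow : ∀ k : Fin mA, ∃ l, v (Sum.inl (k, l)) ≠ 0 := by
      intro k
      by_contra h
      push_neg at h
      have : ∑ l, v (Sum.inl (k, l)) = 0 := Finset.sum_eq_zero fun l _ => h l
      rw [congrFun hs1 k] at this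
      exact one_ne_zero this
    choose f hf using hrow
    have hinj : Function.Injective
        (fun k : Fin mA => (Sum.inl (k, f k) : (Fin mA × Fin mB) ⊕ (Fin rAbar × Fin rBbar))) := by
      intro a b hab
      simp only [Sum.inl.injEq, Prod.mk.injEq] at hab
      exact hab.1
    have := card_le_wt v _ hinj hf
    simpa using this

private lemma Zlog_bound (hmA : 0 < mA) (hmB : 0 < mB)
    (hkerA : {v : Fin mA → ZMod 2 | HA.mulVec v = 0} = {0, fun _ => 1})
    (hkerB : {v : Fin mB → ZMod 2 | HB.mulVec v = 0} = {0, fun _ => 1})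
    (hkerBT : {v : Fin rBbar → ZMod 2 | HB.transpose.mulVec v = 0} = {0})
    (v : (Fin mA × Fin mB) ⊕ (Fin rAbar × Fin rBbar) → ZMod 2)
    (hX : (hgpX HA HB).mulVec v = 0) (hnt : v ∉ rowSpan (hgpZ HA HB)) :
    mB ≤ wt v := by
  have checkX := checkX_eq HA HB v hX
  -- column sums of V lie in ker HB
  have ht : HB.mulVec (fun l => ∑ k, v (Sum.inl (k, l))) = 0 := by
    funext j
    have : HB.mulVec (fun l => ∑ k, v (Sum.inl (k, l))) j
        = ∑ k, ∑ l, HB j l * v (Sum.inl (k, l)) := by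
      simp only [Matrix.mulVec, dotProduct, Finset.mul_sum]
      exact Finset.sum_comm
    rw [this]
    have : ∀ k : Fin mA, ∑ l, HB j l * v (Sum.inl (k, l))
        = ∑ k', HA k' k * v (Sum.inr (k', j)) :=
      fun k => zmod2_eq_of_add_eq_zero (checkX k j)
    rw [Finset.sum_congr rfl (fun k _ => this k), Finset.sum_comm]
    simp only [Pi.zero_apply]
    apply Finset.sum_eq_zero
    intro k' _
    rw [← Finset.sum_mul, rowsum_zero HA hkerA k', zero_mul]
  have htmem : (fun l => ∑ k, v (Sum.inl (k, l))) ∈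
      {u : Fin mB → ZMod 2 | HB.mulVec u = 0} := ht
  rw [hkerB] at htmem
  rcases htmem with ht0 | ht1
  · -- trivial case: v is in the row span of hgpZ, contradiction
    exfalso
    apply hnt
    have ht0' : ∀ l, ∑ k, v (Sum.inl (k, l)) = 0 := fun l => congrFun ht0 l
    have hN : ∀ l : Fin mB, ∃ c : Fin rAbar → ZMod 2,
        HA.transpose.mulVec c = (fun k => v (Sum.inl (k, l))) :=
      fun l => even_mem_range hmA HA hkerA _ (ht0' l)
    choose N₀ hN using hN
    have hN0 : ∀ (l : Fin mB) (k : Fin mA), ∑ i, HA i k * N₀ l i = v (Sum.inl (k, l)) := by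
      intro l k
      have := congrFun (hN l) k
      simpa [Matrix.mulVec, dotProduct, Matrix.transpose_apply] using this
    -- defect matrix
    set D : Fin rAbar → Fin rBbar → ZMod 2 :=
      fun i j => v (Sum.inr (i, j)) + ∑ l, HB j l * N₀ l i with hDdef
    have hD : ∀ (j : Fin rBbar) (k' : Fin mA), ∑ i, HA i k' * D i j = 0 := by
      intro j k'
      have e1 : ∑ i, HA i k' * v (Sum.inr (i, j)) = ∑ l, HB j l * v (Sum.inl (k', l)) :=
        (zmod2_eq_of_add_eq_zero (checkX k' j)).symm
      have e2 : ∑ i, HA i k' * (∑ l, HB j l * N₀ l i)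
          = ∑ l, HB j l * v (Sum.inl (k', l)) := by
        calc ∑ i, HA i k' * (∑ l, HB j l * N₀ l i)
            = ∑ i, ∑ l, HA i k' * (HB j l * N₀ l i) := by simp [Finset.mul_sum]
          _ = ∑ l, ∑ i, HA i k' * (HB j l * N₀ l i) := Finset.sum_comm
          _ = ∑ l, HB j l * ∑ i, HA i k' * N₀ l i := by
              refine Finset.sum_congr rfl fun l _ => ?_
              rw [Finset.mul_sum]
              exact Finset.sum_congr rfl fun i _ => by ring
          _ = ∑ l, HB j l * v (Sum.inl (k', l)) :=
              Finset.sum_congr rfl fun l _ => by rw [hN0 l k']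
      calc ∑ i, HA i k' * D i j
          = (∑ i, HA i k' * v (Sum.inr (i, j)))
            + ∑ i, HA i k' * (∑ l, HB j l * N₀ l i) := by
            simp [hDdef, mul_add, Finset.sum_add_distrib]
        _ = 0 := by rw [e1, e2]; exact zmod2_add_self _
    -- right inverse of HB
    have hsurj := surj_of_kerT HB hkerBT
    have hp : ∀ j : Fin rBbar, ∃ c : Fin mB → ZMod 2, HB.mulVec c = Pi.single j 1 :=
      fun j => hsurj _
    choose p hp using hp
    have hp' : ∀ (j j' : Fin rBbar), ∑ l, HB j' l * p j l = if j' = j then 1 else 0 := by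
      intro j j'
      have := congrFun (hp j) j'
      simpa [Matrix.mulVec, dotProduct, Pi.single_apply] using this
    -- correction matrix K
    set K : Fin rAbar → Fin mB → ZMod 2 :=
      fun i l => ∑ j, D i j * p j l with hKdef
    have hK1 : ∀ (i : Fin rAbar) (j' : Fin rBbar), ∑ l, HB j' l * K i l = D i j' := by
      intro i j'
      calc ∑ l, HB j' l * K i l
          = ∑ l, ∑ j, HB j' l * (D i j * p j l) := by simp [hKdef, Finset.mul_sum]
        _ = ∑ j, ∑ l, HB j' l * (D i j * p j l) := Finset.sum_comm
        _ = ∑ j, D i j * ∑ l, HB j' l * p j l := by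
            refine Finset.sum_congr rfl fun j _ => ?_
            rw [Finset.mul_sum]
            exact Finset.sum_congr rfl fun l _ => by ring
        _ = ∑ j, D i j * (if j' = j then 1 else 0) :=
            Finset.sum_congr rfl fun j _ => by rw [hp' j j']
        _ = D i j' := by simp [mul_ite, mul_one, mul_zero, Finset.sum_ite_eq]
    have hK2 : ∀ (l : Fin mB) (k' : Fin mA), ∑ i, HA i k' * K i l = 0 := by
      intro l k'
      calc ∑ i, HA i k' * K i l
          = ∑ i, ∑ j, HA i k' * (D i j * p j l) := by simp [hKdef, Finset.mul_sum]
        _ = ∑ j, ∑ i, HA i k' * (D i j * p j l) := Finset.sum_comm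
        _ = ∑ j, p j l * ∑ i, HA i k' * D i j := by
            refine Finset.sum_congr rfl fun j _ => ?_
            rw [Finset.mul_sum]
            exact Finset.sum_congr rfl fun i _ => by ring
        _ = 0 := by
            apply Finset.sum_eq_zero
            intro j _
            rw [hD j k', mul_zero]
    -- final coefficient matrix
    set N : Fin rAbar → Fin mB → ZMod 2 := fun i l => N₀ l i + K i l with hNdef
    have hNV : ∀ (k : Fin mA) (l : Fin mB), ∑ i, HA i k * N i l = v (Sum.inl (k, l)) := by
      intro k l
      calc ∑ i, HA i k * N i l
          = (∑ i, HA i k * N₀ l i) + ∑ i, HA i k * K i l := by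
            simp [hNdef, mul_add, Finset.sum_add_distrib]
        _ = v (Sum.inl (k, l)) := by rw [hN0 l k, hK2 l k, add_zero]
    have hNC : ∀ (i : Fin rAbar) (j : Fin rBbar), ∑ l, HB j l * N i l = v (Sum.inr (i, j)) := by
      intro i j
      calc ∑ l, HB j l * N i l
          = (∑ l, HB j l * N₀ l i) + ∑ l, HB j l * K i l := by
            simp [hNdef, mul_add, Finset.sum_add_distrib]
        _ = (∑ l, HB j l * N₀ l i) + (v (Sum.inr (i, j)) + ∑ l, HB j l * N₀ l i) := by
            rw [hK1 i j]
        _ = v (Sum.inr (i, j)) := by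
            rw [show ∀ a c : ZMod 2, a + (c + a) = c + (a + a) from fun a c => by ring,
              zmod2_add_self, add_zero]
    apply mem_rowSpan_of_eq_sum (hgpZ HA HB) (fun p : Fin rAbar × Fin mB => N p.1 p.2)
    intro q
    rcases q with ⟨k, l⟩ | ⟨k, l⟩
    · have : ∑ p : Fin rAbar × Fin mB, N p.1 p.2 * hgpZ HA HB p (Sum.inl (k, l))
          = ∑ i, N i l * HA i k := by
        simp [hgpZ, Fintype.sum_prod_type, mul_ite, mul_zero, ite_mul, zero_mul,
          Finset.sum_ite_irrel, Finset.sum_const_zero, Finset.sum_ite_eq, Finset.sum_ite_eq']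
      rw [this, ← hNV k l]
      exact Finset.sum_congr rfl fun i _ => by ring
    · have : ∑ p : Fin rAbar × Fin mB, N p.1 p.2 * hgpZ HA HB p (Sum.inr (k, l))
          = ∑ j, N k j * HB l j := by
        simp [hgpZ, Fintype.sum_prod_type, mul_ite, mul_zero, ite_mul, zero_mul,
          Finset.sum_ite_irrel, Finset.sum_const_zero, Finset.sum_ite_eq, Finset.sum_ite_eq']
      rw [this, ← hNC k l]
      exact Finset.sum_congr rfl fun j _ => by ring
  · -- nontrivial case: every column of V is nonzero
    have hcol : ∀ l : Fin mB, ∃ k, v (Sum.inl (k, l)) ≠ 0 := by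
      intro l
      by_contra h
      push_neg at h
      have : ∑ k, v (Sum.inl (k, l)) = 0 := Finset.sum_eq_zero fun k _ => h k
      rw [congrFun ht1 l] at this
      exact one_ne_zero this
    choose f hf using hcol
    have hinj : Function.Injective
        (fun l : Fin mB => (Sum.inl (f l, l) : (Fin mA × Fin mB) ⊕ (Fin rAbar × Fin rBbar))) := by
      intro a b hab
      simp only [Sum.inl.injEq, Prod.mk.injEq] at hab
      exact hab.2
    have := card_le_wt v _ hinj hf
    simpa using this

private lemma colVV_inker (hkerA : {v : Fin mA → ZMod 2 | HA.mulVec v = 0} = {0, fun _ => 1})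
    (ℓ : Fin mB) :
    (hgpZ HA HB).mulVec (colVV ℓ) = 0 := by
  funext p
  rcases p with ⟨i, j⟩
  have : (hgpZ HA HB).mulVec (colVV ℓ) (i, j)
      = ∑ k, ∑ l, (if j = l then HA i k else 0) * (if l = ℓ then 1 else 0) := by
    simp [Matrix.mulVec, dotProduct, hgpZ, colVV, Fintype.sum_sum_type,
      Fintype.sum_prod_type]
  rw [this]
  by_cases hj : j = ℓ
  · subst hj
    simp only [mul_ite, mul_one, mul_zero, ite_mul, zero_mul]
    simp [Finset.sum_ite_eq, ← Finset.sum_mul]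
    simpa using rowsum_zero HA hkerA i
  · simp only [Pi.zero_apply]
    apply Finset.sum_eq_zero
    intro k _
    apply Finset.sum_eq_zero
    intro l _
    by_cases h1 : j = l
    · subst h1
      simp [hj]
    · simp [h1]

private lemma rowVV_inker (hkerB : {v : Fin mB → ZMod 2 | HB.mulVec v = 0} = {0, fun _ => 1})
    (k0 : Fin mA) :
    (hgpX HA HB).mulVec (rowVV k0) = 0 := by
  funext p
  rcases p with ⟨i, j⟩
  have : (hgpX HA HB).mulVec (rowVV k0) (i, j)
      = ∑ k, ∑ l, (if i = k then HB j l else 0) * (if k = k0 then 1 else 0) := by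
    simp [Matrix.mulVec, dotProduct, hgpX, rowVV, Fintype.sum_sum_type,
      Fintype.sum_prod_type]
  rw [this]
  by_cases hi : i = k0
  · subst hi
    simp only [mul_ite, mul_one, mul_zero, ite_mul, zero_mul]
    simp [Finset.sum_ite_irrel, Finset.sum_const_zero, Finset.sum_ite_eq]
    simpa using rowsum_zero HB hkerB j
  · simp only [Pi.zero_apply]
    apply Finset.sum_eq_zero
    intro k _
    apply Finset.sum_eq_zero
    intro l _
    by_cases h1 : i = k
    · subst h1
      simp [hi]
    · simp [h1]

private lemma colVV_not_mem (hmA : 0 < mA)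
    (hkerB : {v : Fin mB → ZMod 2 | HB.mulVec v = 0} = {0, fun _ => 1}) (ℓ : Fin mB) :
    (colVV (rA := rAbar) (rB := rBbar) ℓ) ∉ rowSpan (hgpX HA HB) := by
  apply not_mem_rowSpan_of_pairing (hgpX HA HB)
    (sumAt (fun l : Fin mB => (Sum.inl (⟨0, hmA⟩, l) : (Fin mA × Fin mB) ⊕ (Fin rAbar × Fin rBbar))))
  · rintro ⟨i, j⟩
    simp only [sumAt, LinearMap.coe_mk, AddHom.coe_mk, hgpX, Matrix.of_apply]
    by_cases hi : i = (⟨0, hmA⟩ : Fin mA)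
    · simp only [hi, if_pos rfl]
      exact rowsum_zero HB hkerB j
    · simp [hi]
  · simp [sumAt, colVV, Finset.sum_ite_eq]

private lemma rowVV_not_mem (hmB : 0 < mB)
    (hkerA : {v : Fin mA → ZMod 2 | HA.mulVec v = 0} = {0, fun _ => 1}) (k0 : Fin mA) :
    (rowVV (rA := rAbar) (rB := rBbar) k0) ∉ rowSpan (hgpZ HA HB) := by
  apply not_mem_rowSpan_of_pairing (hgpZ HA HB)
    (sumAt (fun k : Fin mA => (Sum.inl (k, ⟨0, hmB⟩) : (Fin mA × Fin mB) ⊕ (Fin rAbar × Fin rBbar))))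
  · rintro ⟨i, j⟩
    simp only [sumAt, LinearMap.coe_mk, AddHom.coe_mk, hgpZ, Matrix.of_apply]
    by_cases hj : j = (⟨0, hmB⟩ : Fin mB)
    · simp only [hj, if_pos rfl]
      exact rowsum_zero HA hkerA i
    · simp [hj]
  · simp [sumAt, rowVV, Finset.sum_ite_eq]

private lemma wt_colVV (ℓ : Fin mB) :
    wt (colVV (nA := mA) (rA := rAbar) (rB := rBbar) ℓ) = mA := by
  rw [wt]
  have : (Finset.univ.filter fun q => colVV (nA := mA) (rA := rAbar) (rB := rBbar) ℓ q ≠ 0)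
      = Finset.univ.image (fun k : Fin mA =>
          (Sum.inl (k, ℓ) : (Fin mA × Fin mB) ⊕ (Fin rAbar × Fin rBbar))) := by
    ext q
    simp only [Finset.mem_filter, Finset.mem_univ, true_and]
    rcases q with ⟨k, l⟩ | ⟨k, l⟩
    · by_cases hl : l = ℓ
      · subst hl
        simp [colVV]
      · simp [colVV, hl, Ne.symm hl]
    · simp [colVV]
  rw [this, Finset.card_image_of_injective _ (fun a b hab => by
    simpa using (Prod.mk.injEq _ _ _ _ ▸ Sum.inl.inj hab).1)]
  simp

private lemma wt_rowVV (k0 : Fin mA) :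
    wt (rowVV (nB := mB) (rA := rAbar) (rB := rBbar) k0) = mB := by
  rw [wt]
  have : (Finset.univ.filter fun q => rowVV (nB := mB) (rA := rAbar) (rB := rBbar) k0 q ≠ 0)
      = Finset.univ.image (fun l : Fin mB =>
          (Sum.inl (k0, l) : (Fin mA × Fin mB) ⊕ (Fin rAbar × Fin rBbar))) := by
    ext q
    simp only [Finset.mem_filter, Finset.mem_univ, true_and]
    rcases q with ⟨k, l⟩ | ⟨k, l⟩
    · by_cases hk : k = k0
      · subst hk
        simp [rowVV]
      · simp [rowVV, hk, Ne.symm hk]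
    · simp [rowVV]
  rw [this, Finset.card_image_of_injective _ (fun a b hab => by
    simpa using (Prod.mk.injEq _ _ _ _ ▸ Sum.inl.inj hab).2)]
  simp

end Main

/-- Distance of the non-degenerate ancilla patch: under the non-degeneracy conditions
`ker H_Ā = {0,𝟙}`, `ker H_B̄ = {0,𝟙}`, `ker H_B̄ᵀ = {0}`, (a) every nontrivial `X`-type and
every nontrivial `Z`-type logical operator of the hypergraph product code of `(H_Ā, H_B̄)` has
weight at least `min m_A m_B`; (b) there is a nontrivial `X`-type logical of weight exactly
`m_A` supported on a column of `VV`, and a nontrivial `Z`-type logical of weight exactly `m_B`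
supported on a row of `VV`; hence the code distance equals `min m_A m_B`. -/
theorem ancilla_patch_distance
    {rAbar mA rBbar mB : ℕ} (hmA : 0 < mA) (hmB : 0 < mB)
    (HAbar : Matrix (Fin rAbar) (Fin mA) (ZMod 2))
    (HBbar : Matrix (Fin rBbar) (Fin mB) (ZMod 2))
    (hkerA : {v : Fin mA → ZMod 2 | HAbar.mulVec v = 0} = {0, fun _ => 1})
    (hkerB : {v : Fin mB → ZMod 2 | HBbar.mulVec v = 0} = {0, fun _ => 1})
    (hkerBT : {v : Fin rBbar → ZMod 2 | HBbar.transpose.mulVec v = 0} = {0}) :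
    (∀ v : (Fin mA × Fin mB) ⊕ (Fin rAbar × Fin rBbar) → ZMod 2,
      (hgpZ HAbar HBbar).mulVec v = 0 → v ∉ rowSpan (hgpX HAbar HBbar) →
        min mA mB ≤ wt v) ∧
    (∀ v : (Fin mA × Fin mB) ⊕ (Fin rAbar × Fin rBbar) → ZMod 2,
      (hgpX HAbar HBbar).mulVec v = 0 → v ∉ rowSpan (hgpZ HAbar HBbar) →
        min mA mB ≤ wt v) ∧
    (∃ ℓ : Fin mB, (hgpZ HAbar HBbar).mulVec (colVV ℓ) = 0 ∧
      (colVV (rA := rAbar) (rB := rBbar) ℓ) ∉ rowSpan (hgpX HAbar HBbar) ∧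
      wt (colVV (nA := mA) (rA := rAbar) (rB := rBbar) ℓ) = mA) ∧
    (∃ k : Fin mA, (hgpX HAbar HBbar).mulVec (rowVV k) = 0 ∧
      (rowVV (rA := rAbar) (rB := rBbar) k) ∉ rowSpan (hgpZ HAbar HBbar) ∧
      wt (rowVV (nB := mB) (rA := rAbar) (rB := rBbar) k) = mB) ∧
    IsLeast {d : ℕ | ∃ v : (Fin mA × Fin mB) ⊕ (Fin rAbar × Fin rBbar) → ZMod 2,
      (((hgpZ HAbar HBbar).mulVec v = 0 ∧ v ∉ rowSpan (hgpX HAbar HBbar)) ∨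
       ((hgpX HAbar HBbar).mulVec v = 0 ∧ v ∉ rowSpan (hgpZ HAbar HBbar))) ∧ wt v = d}
      (min mA mB) := by
  refine ⟨?_, ?_, ?_, ?_, ?_⟩
  · intro v h1 h2
    exact le_trans (min_le_left _ _)
      (Xlog_bound HAbar HBbar hmA hmB hkerA hkerB hkerBT v h1 h2)
  · intro v h1 h2
    exact le_trans (min_le_right _ _)
      (Zlog_bound HAbar HBbar hmA hmB hkerA hkerB hkerBT v h1 h2)
  · exact ⟨⟨0, hmB⟩, colVV_inker HAbar HBbar hkerA _,
      colVV_not_mem HAbar HBbar hmA hkerB _, wt_colVV _⟩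
  · exact ⟨⟨0, hmA⟩, rowVV_inker HAbar HBbar hkerB _,
      rowVV_not_mem HAbar HBbar hmB hkerA _, wt_rowVV _⟩
  · constructor
    · rcases le_or_gt mA mB with h | h
      · refine ⟨colVV ⟨0, hmB⟩, Or.inl ⟨colVV_inker HAbar HBbar hkerA _,
          colVV_not_mem HAbar HBbar hmA hkerB _⟩, ?_⟩
        rw [wt_colVV]
        omega
      · refine ⟨rowVV ⟨0, hmA⟩, Or.inr ⟨rowVV_inker HAbar HBbar hkerB _,
          rowVV_not_mem HAbar HBbar hmB hkerA _⟩, ?_⟩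
        rw [wt_rowVV]
        omega
    · rintro d ⟨v, h, rfl⟩
      rcases h with ⟨h1, h2⟩ | ⟨h1, h2⟩
      · exact le_trans (min_le_left _ _)
          (Xlog_bound HAbar HBbar hmA hmB hkerA hkerB hkerBT v h1 h2)
      · exact le_trans (min_le_right _ _)
          (Zlog_bound HAbar HBbar hmA hmB hkerA hkerB hkerBT v h1 h2)
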